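/- Consider the linear recursion h^{k+1} = W^k (h^k + δ^k e_{i^k}) in ℝ^n, where each W^k is row stochastic, and suppose there exist stochastic vectors {ψ^k} and constants C₂ > 0, ρ ∈ (0,1) with ‖W^{k:t} − 1 (ψ^t)^T‖ ≤ C₂ ρ^{k−t} for all k ≥ t. Define y^0 = (ψ^0)^T h^0 and y^{k+1} = y^k + ψ^k_{i^k} δ^k. Then for all k ≥ 0, ‖h^{k+1} − 1 y^{k+1}‖ ≤ C₂ ρ^k ‖h^0 − 1 y^0‖ + C₂ Σ_{l=0}^k ρ^{k−l} |δ^l|. -/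

import Mathlib

open scoped Matrix.Norms.L2Operator

/-- consensus-error bound for the perturbed asynchronous
consensus recursion `h^{k+1} = W^k (h^k + δ^k e_{i^k})`. -/
theorem perturbed_consensus_error (n : ℕ) (hn : 0 < n)
    (W : ℕ → Matrix (Fin n) (Fin n) ℝ)
    (hWnn : ∀ k i j, 0 ≤ W k i j) (hWrow : ∀ k i, ∑ j : Fin n, W k i j = 1)
    -- ordered products `P k t = W k * W (k-1) * ⋯ * W t`
    (P : ℕ → ℕ → Matrix (Fin n) (Fin n) ℝ)
    (hP0 : ∀ t, P t t = W t)
    (hPs : ∀ k t, t ≤ k → P (k + 1) t = W (k + 1) * P k t)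
    (psi : ℕ → Fin n → ℝ)
    (hpsinn : ∀ k i, 0 ≤ psi k i) (hpsisum : ∀ k, ∑ i : Fin n, psi k i = 1)
    (C2 rho : ℝ) (hC2 : 0 < C2) (hrho : 0 < rho ∧ rho < 1)
    (hgeom : ∀ k t, t ≤ k →
      ‖P k t - Matrix.of fun _ j => psi t j‖ ≤ C2 * rho ^ (k - t))
    (h : ℕ → Fin n → ℝ) (delta : ℕ → ℝ) (idx : ℕ → Fin n)
    (hrec : ∀ k, h (k + 1) = (W k).mulVec (h k + delta k • (Pi.single (idx k) 1 : Fin n → ℝ)))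
    (y : ℕ → ℝ)
    (hy0 : y 0 = ∑ i : Fin n, psi 0 i * h 0 i)
    (hy : ∀ k, y (k + 1) = y k + psi k (idx k) * delta k) :
    ∀ k : ℕ,
      Real.sqrt (∑ i : Fin n, (h (k + 1) i - y (k + 1)) ^ 2) ≤
        C2 * rho ^ k * Real.sqrt (∑ i : Fin n, (h 0 i - y 0) ^ 2) +
          C2 * ∑ l ∈ Finset.range (k + 1), rho ^ (k - l) * |delta l| := by
  obtain ⟨hr0, hr1⟩ := hrho
  set J : ℕ → Matrix (Fin n) (Fin n) ℝ := fun t => Matrix.of fun _ j => psi t j with hJ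
  -- row-stochastic matrices fix constant vectors
  have hconst : ∀ k (c : ℝ), (W k).mulVec (fun _ => c) = fun _ => c := by
    intro k c; funext i
    simp only [Matrix.mulVec, dotProduct]
    rw [← Finset.sum_mul, hWrow, one_mul]
  have hJmul : ∀ t (v : Fin n → ℝ),
      (J t).mulVec v = fun _ => ∑ j : Fin n, psi t j * v j := by
    intro t v; funext i
    simp [hJ, Matrix.mulVec, dotProduct]
  have hJe : ∀ t, (J t).mulVec (delta t • (Pi.single (idx t) 1 : Fin n → ℝ))
      = fun _ => psi t (idx t) * delta t := by
    intro t
    rw [hJmul]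
    funext i
    rw [Finset.sum_eq_single (idx t)]
    · simp
    · intro b _ hb; simp [Pi.single_apply, hb]
    · intro hb; exact absurd (Finset.mem_univ _) hb
  have hJ0h : (J 0).mulVec (fun j => h 0 j - y 0) = 0 := by
    rw [hJmul]
    funext i
    have : ∑ j : Fin n, psi 0 j * (h 0 j - y 0)
        = (∑ j : Fin n, psi 0 j * h 0 j) - (∑ j : Fin n, psi 0 j) * y 0 := by
      rw [Finset.sum_mul, ← Finset.sum_sub_distrib]
      exact Finset.sum_congr rfl fun j _ => by ring
    rw [Pi.zero_apply, this, hpsisum, ← hy0]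
    ring
  -- `W m` applied to `h m - const (y m)`
  have hWsub : ∀ m, (W m).mulVec (fun j => h m j - y m)
      = (W m).mulVec (h m) - fun _ => y m := by
    intro m
    have : (fun j => h m j - y m) = h m - (fun _ => y m) := rfl
    rw [this, Matrix.mulVec_sub, hconst]
  -- the key identity
  have key : ∀ k : ℕ, (fun i => h (k + 1) i - y (k + 1)) =
      (P k 0 - J 0).mulVec (fun j => h 0 j - y 0) +
        ∑ l ∈ Finset.range (k + 1),
          (P k l - J l).mulVec (delta l • (Pi.single (idx l) 1 : Fin n → ℝ)) := by
    intro k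
    induction k with
    | zero =>
        rw [Finset.range_one, Finset.sum_singleton, hP0 0,
          Matrix.sub_mulVec, Matrix.sub_mulVec, hJ0h, hJe 0, hWsub 0]
        funext i
        simp only [hrec 0, hy 0, Matrix.mulVec_add, Pi.add_apply, Pi.sub_apply,
          sub_zero]
        ring
    | succ k ih =>
        have step : (fun i => h (k + 2) i - y (k + 2)) =
            (W (k + 1)).mulVec (fun j => h (k + 1) j - y (k + 1)) +
              (W (k + 1) - J (k + 1)).mulVec
                (delta (k + 1) • (Pi.single (idx (k + 1)) 1 : Fin n → ℝ)) := by
          rw [Matrix.sub_mulVec, hJe (k + 1), hWsub (k + 1)]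
          funext i
          simp only [hrec (k + 1), hy (k + 1), Matrix.mulVec_add, Pi.add_apply,
            Pi.sub_apply]
          ring
        rw [step, ih, Matrix.mulVec_add]
        have hsum : (W (k + 1)).mulVec (∑ l ∈ Finset.range (k + 1),
            (P k l - J l).mulVec (delta l • (Pi.single (idx l) 1 : Fin n → ℝ)))
            = ∑ l ∈ Finset.range (k + 1), (W (k + 1)).mulVec
              ((P k l - J l).mulVec (delta l • (Pi.single (idx l) 1 : Fin n → ℝ))) :=
          map_sum ((W (k + 1)).mulVecLin)
            (fun l => (P k l - J l).mulVec (delta l • (Pi.single (idx l) 1 : Fin n → ℝ)))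
            (Finset.range (k + 1))
        rw [hsum]
        have hab : ∀ t, t ≤ k → ∀ v : Fin n → ℝ,
            (W (k + 1)).mulVec ((P k t - J t).mulVec v) = (P (k + 1) t - J t).mulVec v := by
          intro t ht v
          rw [Matrix.sub_mulVec (P k t), Matrix.mulVec_sub, Matrix.mulVec_mulVec,
            ← hPs k t ht]
          have hcJ : (W (k + 1)).mulVec ((J t).mulVec v) = (J t).mulVec v := by
            rw [hJmul t v]; exact hconst (k + 1) _
          rw [hcJ, ← Matrix.sub_mulVec]
        rw [Finset.sum_congr rfl
          (fun l hl => hab l (Nat.lt_succ_iff.mp (Finset.mem_range.mp hl)) _),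
          hab 0 (Nat.zero_le k) _]
        conv_rhs => rw [Finset.sum_range_succ]
        rw [← hP0 (k + 1), add_assoc]
  -- norms
  have hnorm : ∀ v : Fin n → ℝ,
      Real.sqrt (∑ i : Fin n, v i ^ 2) = ‖(EuclideanSpace.equiv (Fin n) ℝ).symm v‖ := by
    intro v
    rw [EuclideanSpace.norm_eq]
    congr 1
    refine Finset.sum_congr rfl fun i _ => ?_
    rw [Real.norm_eq_abs, sq_abs]
    rfl
  intro k
  rw [hnorm, hnorm]
  rw [key k]
  set E : (Fin n → ℝ) ≃L[ℝ] EuclideanSpace ℝ (Fin n) := (EuclideanSpace.equiv (Fin n) ℝ).symm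
  calc ‖E ((P k 0 - J 0).mulVec (fun j => h 0 j - y 0) +
        ∑ l ∈ Finset.range (k + 1),
          (P k l - J l).mulVec (delta l • (Pi.single (idx l) 1 : Fin n → ℝ)))‖
      ≤ ‖E ((P k 0 - J 0).mulVec (fun j => h 0 j - y 0))‖ +
        ‖E (∑ l ∈ Finset.range (k + 1),
          (P k l - J l).mulVec (delta l • (Pi.single (idx l) 1 : Fin n → ℝ)))‖ := by
        rw [map_add]; exact norm_add_le _ _
    _ ≤ C2 * rho ^ k * ‖E (fun j => h 0 j - y 0)‖ +
        C2 * ∑ l ∈ Finset.range (k + 1), rho ^ (k - l) * |delta l| := by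
        gcongr
        · have h1 := Matrix.l2_opNorm_mulVec (P k 0 - J 0)
            ((EuclideanSpace.equiv (Fin n) ℝ).symm (fun j => h 0 j - y 0))
          refine h1.trans ?_
          have hg : ‖P k 0 - J 0‖ ≤ C2 * rho ^ k := by simpa using hgeom k 0 (Nat.zero_le k)
          exact mul_le_mul_of_nonneg_right hg (norm_nonneg _)
        · rw [map_sum]
          refine (norm_sum_le _ _).trans ?_
          rw [Finset.mul_sum]
          refine Finset.sum_le_sum fun l hl => ?_
          have hlk : l ≤ k := Nat.lt_succ_iff.mp (Finset.mem_range.mp hl)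
          have h1 := Matrix.l2_opNorm_mulVec (P k l - J l)
            ((EuclideanSpace.equiv (Fin n) ℝ).symm
              (delta l • (Pi.single (idx l) 1 : Fin n → ℝ)))
          refine h1.trans ?_
          have h2 : ‖(EuclideanSpace.equiv (Fin n) ℝ).symm
              (delta l • (Pi.single (idx l) 1 : Fin n → ℝ))‖ = |delta l| := by
            rw [map_smul, norm_smul]
            have : ((EuclideanSpace.equiv (Fin n) ℝ).symm
                (Pi.single (idx l) 1 : Fin n → ℝ)) = EuclideanSpace.single (idx l) (1:ℝ) := rfl
            rw [this, EuclideanSpace.norm_single]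
            simp [Real.norm_eq_abs]
          rw [h2]
          have hg : ‖P k l - J l‖ ≤ C2 * rho ^ (k - l) := by simpa using hgeom k l hlk
          have hb := mul_le_mul_of_nonneg_right hg (abs_nonneg (delta l))
          rw [mul_assoc] at hb
          exact hb
    _ = _ := rfl
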